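/- Let η be the diagonal 4×4 matrix diag(1, −1, −1, −1). Let F : ℝ⁴ → (Fin 4 → Fin 4 → ℝ) be smooth and compactly supported with F_{μν} = −F_{νμ}, let e ∈ ℝ⁴ be nonzero, and define A_μ(x) := ∫₀^∞ ∑_ν F_{μν}(x + t·e) e_ν dt. Then: (i) ∑_μ e_μ A_μ(x) = 0 for all x; and (ii) if F satisfies the free Maxwell equations ∑_{μ,ρ} η^{μρ} ∂_ρ F_{μν}(x) = 0 for all ν and x, then ∑_{μ,ρ} η^{μρ} ∂_ρ A_μ(x) = 0 for all x. -/

import Mathlib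

open MeasureTheory Set

-- Auxiliary lemmas
lemma exists_escape (K : Set (Fin 4 → ℝ)) (hK : Bornology.IsBounded K)
    {e : Fin 4 → ℝ} {i : Fin 4} (hi : e i ≠ 0) (x : Fin 4 → ℝ) :
    ∃ T : ℝ, 0 < T ∧ ∀ x' : Fin 4 → ℝ, dist x' x ≤ 1 → ∀ t : ℝ, T < |t| → x' + t • e ∉ K := by
  obtain ⟨R, hR⟩ := hK.subset_closedBall 0
  refine ⟨(|R| + ‖x‖ + 1) / |e i| + 1, by positivity, fun x' hx' t ht hmem => ?_⟩
  have h1 : ‖x' + t • e‖ ≤ R := by simpa using hR hmem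
  have h2 : |(x' + t • e) i| ≤ R := by
    simpa [Real.norm_eq_abs] using (norm_le_pi_norm (x' + t • e) i).trans h1
  have h3 : |x' i| ≤ ‖x‖ + 1 := by
    calc |x' i| ≤ ‖x'‖ := by simpa [Real.norm_eq_abs] using norm_le_pi_norm x' i
    _ ≤ ‖x‖ + dist x' x := by rw [dist_eq_norm]; exact norm_le_norm_add_norm_sub' x' x
    _ ≤ ‖x‖ + 1 := by linarith
  have h4 : |t * e i| ≤ |(x' + t • e) i| + |x' i| := by
    have : t * e i = (x' + t • e) i - x' i := by simp [mul_comm]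
    rw [this]; exact abs_sub _ _
  have h5 : |t| * |e i| ≤ |R| + ‖x‖ + 1 := by
    rw [← abs_mul]
    calc |t * e i| ≤ |(x' + t • e) i| + |x' i| := h4
    _ ≤ |R| + (‖x‖ + 1) := add_le_add (h2.trans (le_abs_self R)) h3
    _ = |R| + ‖x‖ + 1 := by ring
  have hei : 0 < |e i| := abs_pos.mpr hi
  have : ((|R| + ‖x‖ + 1) / |e i| + 1) * |e i| ≤ |t| * |e i| :=
    mul_le_mul_of_nonneg_right ht.le hei.le
  rw [add_mul, div_mul_cancel₀ _ hei.ne'] at this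
  nlinarith

lemma hcs_line {E : Type*} [NormedAddCommGroup E] {g : (Fin 4 → ℝ) → E}
    (hsg : HasCompactSupport g) {e : Fin 4 → ℝ} {i : Fin 4} (hi : e i ≠ 0) (x : Fin 4 → ℝ) :
    HasCompactSupport (fun t : ℝ => g (x + t • e)) := by
  obtain ⟨T, hT0, hT⟩ := exists_escape (tsupport g) hsg.isBounded hi x
  apply HasCompactSupport.intro (isCompact_Icc (a := -T) (b := T))
  intro t ht
  have ht' : T < |t| := by
    simp only [mem_Icc, not_and_or, not_le] at ht
    rcases ht with h | h
    · exact lt_abs.mpr (Or.inr (by linarith))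
    · exact lt_abs.mpr (Or.inl h)
  have := hT x (by simp) t ht'
  exact image_eq_zero_of_notMem_tsupport this

lemma integrable_line {E : Type*} [NormedAddCommGroup E] [NormedSpace ℝ E]
    {g : (Fin 4 → ℝ) → E} (hg : Continuous g)
    (hsg : HasCompactSupport g) {e : Fin 4 → ℝ} {i : Fin 4} (hi : e i ≠ 0) (x : Fin 4 → ℝ) :
    Integrable (fun t : ℝ => g (x + t • e)) (volume.restrict (Ioi 0)) := by
  have hc : Continuous (fun t : ℝ => g (x + t • e)) :=
    hg.comp (continuous_const.add (continuous_id.smul continuous_const))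
  exact (hc.integrable_of_hasCompactSupport (hcs_line hsg hi x)).restrict

lemma hasFDeriv_string {f : (Fin 4 → ℝ) → ℝ} (hf : ContDiff ℝ (⊤ : ℕ∞) f)
    (hs : HasCompactSupport f) {e : Fin 4 → ℝ} {i : Fin 4} (hi : e i ≠ 0) (x : Fin 4 → ℝ) :
    HasFDerivAt (fun y => ∫ t in Ioi (0:ℝ), f (y + t • e))
      (∫ t in Ioi (0:ℝ), fderiv ℝ f (x + t • e)) x := by
  have hfc : Continuous (fderiv ℝ f) := hf.continuous_fderiv (by simp)
  obtain ⟨C, hC⟩ := (hs.fderiv (𝕜 := ℝ)).exists_bound_of_continuous hfc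
  obtain ⟨T, hT0, hT⟩ := exists_escape (tsupport f) hs.isBounded hi x
  have hC0 : 0 ≤ C := le_trans (norm_nonneg _) (hC 0)
  apply hasFDerivAt_integral_of_dominated_of_fderiv_le
    (F' := fun y t => fderiv ℝ f (y + t • e))
    (bound := Set.indicator (Icc (-T) T) fun _ => C) (s := Metric.ball x 1) (Metric.ball_mem_nhds x one_pos)
  · refine Filter.Eventually.of_forall fun y => ?_
    exact ((hf.continuous.comp
      (continuous_const.add (continuous_id.smul continuous_const))).aestronglyMeasurable)
  · exact integrable_line hf.continuous hs hi x
  · exact ((hfc.comp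
      (continuous_const.add (continuous_id.smul continuous_const))).aestronglyMeasurable)
  · refine Filter.Eventually.of_forall fun t y hy => ?_
    by_cases ht : t ∈ Icc (-T) T
    · rw [Set.indicator_of_mem ht]
      exact hC _
    · rw [Set.indicator_of_notMem ht]
      have ht' : T < |t| := by
        simp only [mem_Icc, not_and_or, not_le] at ht
        rcases ht with h | h
        · exact lt_abs.mpr (Or.inr (by linarith))
        · exact lt_abs.mpr (Or.inl h)
      have hnm : y + t • e ∉ tsupport f := hT y (by simpa using (Metric.mem_ball.mp hy).le) t ht'
      have : fderiv ℝ f (y + t • e) = 0 := by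
        by_contra h
        exact hnm (support_fderiv_subset ℝ (Function.mem_support.mpr h))
      simp [this]
  · have : Integrable (Set.indicator (Icc (-T) T) fun _ => C) (volume : Measure ℝ) := by
      rw [integrable_indicator_iff measurableSet_Icc]
      exact integrableOn_const measure_Icc_lt_top.ne
    exact this.restrict
  · refine Filter.Eventually.of_forall fun t y hy => ?_
    have h1 : HasFDerivAt f (fderiv ℝ f (y + t • e)) (y + t • e) :=
      (hf.differentiable (by simp) _).hasFDerivAt
    have h2 : HasFDerivAt (fun z : Fin 4 → ℝ => z + t • e)
        (ContinuousLinearMap.id ℝ (Fin 4 → ℝ)) y := (hasFDerivAt_id y).add_const (t • e)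
    simpa [Function.comp_def] using h1.comp y h2

/-- The Minkowski metric matrix `diag(1, -1, -1, -1)`. -/
def η (μ ν : Fin 4) : ℝ := if μ = ν then (if μ = 0 then 1 else -1) else 0

/-- Partial derivative in the `ρ`-th coordinate direction of `ℝ⁴`. -/
noncomputable def pd (ρ : Fin 4) (g : (Fin 4 → ℝ) → ℝ) (x : Fin 4 → ℝ) : ℝ :=
  fderiv ℝ g x (Pi.single ρ 1)

/-- transversality of the string-localized potential
`A_μ(x) = ∫₀^∞ ∑_ν F_{μν}(x + t e) e_ν dt`:
(i) `∑_μ e_μ A_μ(x) = 0`; and (ii) if `F` satisfies the free Maxwell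
equations `∑_{μ,ρ} η^{μρ} ∂_ρ F_{μν} = 0`, then
`∑_{μ,ρ} η^{μρ} ∂_ρ A_μ = 0`. -/
theorem string_potential_transversality
    (F : (Fin 4 → ℝ) → Fin 4 → Fin 4 → ℝ)
    (hF : ContDiff ℝ (⊤ : ℕ∞) F) (hsupp : HasCompactSupport F)
    (hanti : ∀ x μ ν, F x μ ν = - F x ν μ)
    (e : Fin 4 → ℝ) (he : e ≠ 0)
    (A : Fin 4 → (Fin 4 → ℝ) → ℝ)
    (hA : ∀ μ x, A μ x = ∫ t in Ioi (0:ℝ), ∑ ν, F (x + t • e) μ ν * e ν) :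
    (∀ x, ∑ μ, e μ * A μ x = 0) ∧
    ((∀ ν x, ∑ μ, ∑ ρ, η μ ρ * pd ρ (fun y => F y μ ν) x = 0) →
      ∀ x, ∑ μ, ∑ ρ, η μ ρ * pd ρ (A μ) x = 0) := by
  obtain ⟨i, hi⟩ : ∃ i, e i ≠ 0 := Function.ne_iff.mp he
  -- components of F are smooth with compact support
  have hFc : ∀ μ ν, ContDiff ℝ (⊤ : ℕ∞) (fun y => F y μ ν) := fun μ ν =>
    contDiff_pi.mp (contDiff_pi.mp hF μ) ν
  have hFs : ∀ μ ν, HasCompactSupport (fun y => F y μ ν) := fun μ ν =>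
    hsupp.comp_left (g := fun m : Fin 4 → Fin 4 → ℝ => m μ ν) rfl
  -- the integrand functions
  set g : Fin 4 → (Fin 4 → ℝ) → ℝ := fun μ y => ∑ ν, F y μ ν * e ν with hg
  have hgc : ∀ μ, ContDiff ℝ (⊤ : ℕ∞) (g μ) := fun μ =>
    ContDiff.sum fun ν _ => (hFc μ ν).mul contDiff_const
  have hgs : ∀ μ, HasCompactSupport (g μ) := by
    intro μ
    have := hsupp.comp_left (g := fun m : Fin 4 → Fin 4 → ℝ => ∑ ν, m μ ν * e ν) (by simp)
    exact this
  constructor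
  · -- part (i)
    intro x
    have hint : ∀ μ : Fin 4, Integrable (fun t : ℝ => g μ (x + t • e))
        (volume.restrict (Ioi 0)) := fun μ =>
      integrable_line (hgc μ).continuous (hgs μ) hi x
    have h1 : ∀ μ : Fin 4, e μ * A μ x = ∫ t in Ioi (0:ℝ), e μ * g μ (x + t • e) := by
      intro μ
      rw [hA μ x, integral_const_mul]
    rw [Finset.sum_congr rfl fun μ _ => h1 μ, ← integral_finset_sum _
      (fun μ _ => (hint μ).const_mul (e μ))]
    have hzero : ∀ t : ℝ, (∑ μ, e μ * g μ (x + t • e)) = 0 := by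
      intro t
      set y := x + t • e
      have : (∑ μ, e μ * g μ y) = ∑ μ, ∑ ν, e μ * F y μ ν * e ν := by
        simp [hg, Finset.mul_sum, mul_assoc]
      rw [this]
      have h2 : (∑ μ, ∑ ν, e μ * F y μ ν * e ν) = -∑ μ, ∑ ν, e μ * F y μ ν * e ν := by
        nth_rewrite 2 [Finset.sum_comm]
        rw [← Finset.sum_neg_distrib]
        refine Finset.sum_congr rfl fun μ _ => ?_
        rw [← Finset.sum_neg_distrib]
        refine Finset.sum_congr rfl fun ν _ => ?_
        rw [hanti y μ ν]; ring
      linarith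
    simp [hzero]
  · -- part (ii)
    intro hMax x
    have hD : ∀ μ : Fin 4, HasFDerivAt (fun y => ∫ t in Ioi (0:ℝ), g μ (y + t • e))
        (∫ t in Ioi (0:ℝ), fderiv ℝ (g μ) (x + t • e)) x :=
      fun μ => hasFDeriv_string (hgc μ) (hgs μ) hi x
    have hint' : ∀ μ : Fin 4, Integrable (fun t : ℝ => fderiv ℝ (g μ) (x + t • e))
        (volume.restrict (Ioi 0)) := fun μ =>
      integrable_line ((hgc μ).continuous_fderiv (by simp)) ((hgs μ).fderiv (𝕜 := ℝ)) hi x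
    have hAg : ∀ μ, A μ = fun y => ∫ t in Ioi (0:ℝ), g μ (y + t • e) := fun μ =>
      funext fun y => hA μ y
    -- fderiv of g μ in terms of pd of components of F
    have hgd : ∀ (μ ρ : Fin 4) (y : Fin 4 → ℝ),
        fderiv ℝ (g μ) y (Pi.single ρ 1) = ∑ ν, pd ρ (fun z => F z μ ν) y * e ν := by
      intro μ ρ y
      have hsum : HasFDerivAt (g μ) (∑ ν, e ν • fderiv ℝ (fun z => F z μ ν) y) y := by
        apply HasFDerivAt.fun_sum
        intro ν _
        have := ((hFc μ ν).differentiable (by simp) y).hasFDerivAt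
        simpa [smul_smul] using this.mul_const (e ν)
      rw [hsum.fderiv]
      simp [pd, ContinuousLinearMap.sum_apply, mul_comm]
    -- compute pd of A μ
    have hpdA : ∀ μ ρ : Fin 4, pd ρ (A μ) x
        = ∫ t in Ioi (0:ℝ), ∑ ν, pd ρ (fun z => F z μ ν) (x + t • e) * e ν := by
      intro μ ρ
      have : fderiv ℝ (A μ) x = ∫ t in Ioi (0:ℝ), fderiv ℝ (g μ) (x + t • e) := by
        rw [hAg μ]; exact (hD μ).fderiv
      rw [pd, this, ContinuousLinearMap.integral_apply (hint' μ)]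
      exact integral_congr_ae (Filter.Eventually.of_forall fun t => hgd μ ρ (x + t • e))
    have hintpd : ∀ μ ρ : Fin 4, Integrable
        (fun t : ℝ => ∑ ν, pd ρ (fun z => F z μ ν) (x + t • e) * e ν)
        (volume.restrict (Ioi 0)) := by
      intro μ ρ
      have := (hint' μ).apply_continuousLinearMap (Pi.single ρ 1)
      refine this.congr ?_
      exact Filter.Eventually.of_forall fun t => (hgd μ ρ (x + t • e))
    calc ∑ μ, ∑ ρ, η μ ρ * pd ρ (A μ) x
        = ∑ μ, ∑ ρ, ∫ t in Ioi (0:ℝ),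
            η μ ρ * ∑ ν, pd ρ (fun z => F z μ ν) (x + t • e) * e ν := by
          refine Finset.sum_congr rfl fun μ _ => Finset.sum_congr rfl fun ρ _ => ?_
          rw [hpdA μ ρ, integral_const_mul]
      _ = ∫ t in Ioi (0:ℝ), ∑ μ, ∑ ρ,
            η μ ρ * ∑ ν, pd ρ (fun z => F z μ ν) (x + t • e) * e ν := by
          rw [integral_finset_sum _ (fun μ _ => integrable_finset_sum _
            (fun ρ _ => (hintpd μ ρ).const_mul _))]
          exact Finset.sum_congr rfl fun μ _ => (integral_finset_sum _
            (fun ρ _ => (hintpd μ ρ).const_mul _)).symm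
      _ = 0 := by
          have hzero : ∀ t : ℝ, (∑ μ, ∑ ρ,
              η μ ρ * ∑ ν, pd ρ (fun z => F z μ ν) (x + t • e) * e ν) = 0 := by
            intro t
            set y := x + t • e
            have step : ∀ μ ρ : Fin 4, η μ ρ * ∑ ν, pd ρ (fun z => F z μ ν) y * e ν
                = ∑ ν, (η μ ρ * pd ρ (fun z => F z μ ν) y) * e ν := by
              intro μ ρ
              rw [Finset.mul_sum]
              exact Finset.sum_congr rfl fun ν _ => by ring
            simp_rw [step]
            rw [show (∑ μ, ∑ ρ, ∑ ν, (η μ ρ * pd ρ (fun z => F z μ ν) y) * e ν)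
                = ∑ ν, ∑ μ, ∑ ρ, (η μ ρ * pd ρ (fun z => F z μ ν) y) * e ν by
              rw [Finset.sum_congr rfl fun μ _ => (Finset.sum_comm :
                (∑ ρ, ∑ ν, (η μ ρ * pd ρ (fun z => F z μ ν) y) * e ν)
                  = ∑ ν, ∑ ρ, (η μ ρ * pd ρ (fun z => F z μ ν) y) * e ν)]
              exact Finset.sum_comm]
            refine Finset.sum_eq_zero fun ν _ => ?_
            simp_rw [← Finset.sum_mul]
            rw [hMax ν y, zero_mul]
          simp [hzero]
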